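/- Let (X,d) be a complete metric space and let m be a Borel measure on X that is finite and strictly positive on every open ball and satisfies m(B(x,2r)) ≤ C_D m(B(x,r)) for all x ∈ X and r > 0, for some constant C_D > 1. Then every open ball B(x,r) is relatively compact in X (i.e., has compact closure). -/

import Mathlib

open Metric ENNReal MeasureTheory

/-- on a complete metric space carrying a Borel measure that is
finite and strictly positive on every open ball and doubling, every open ball is
relatively compact (has compact closure). -/
theorem ball_relatively_compact_of_doubling_measure {X : Type*} [MetricSpace X]
    [CompleteSpace X] [MeasurableSpace X] [BorelSpace X] (m : Measure X)
    (hfin : ∀ (x : X) (r : ℝ), 0 < r → m (Metric.ball x r) < ∞)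
    (hpos : ∀ (x : X) (r : ℝ), 0 < r → 0 < m (Metric.ball x r))
    (C_D : ℝ) (hCD : 1 < C_D)
    (hVD : ∀ (x : X) (r : ℝ), 0 < r →
      m (Metric.ball x (2 * r)) ≤ ENNReal.ofReal C_D * m (Metric.ball x r)) :
    ∀ (x : X) (r : ℝ), IsCompact (closure (Metric.ball x r)) := by
  -- iterated doubling
  have hiter : ∀ (y : X) (s : ℝ), 0 < s → ∀ k : ℕ,
      m (Metric.ball y (2 ^ k * s)) ≤ (ENNReal.ofReal C_D) ^ k * m (Metric.ball y s) := by
    intro y s hs k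
    induction k with
    | zero => simp
    | succ k ih =>
      have h1 : (2 : ℝ) ^ (k + 1) * s = 2 * (2 ^ k * s) := by ring
      have h2 : 0 < (2 : ℝ) ^ k * s := by positivity
      calc m (Metric.ball y (2 ^ (k + 1) * s)) = m (Metric.ball y (2 * (2 ^ k * s))) := by rw [h1]
        _ ≤ ENNReal.ofReal C_D * m (Metric.ball y (2 ^ k * s)) := hVD y _ h2
        _ ≤ ENNReal.ofReal C_D * ((ENNReal.ofReal C_D) ^ k * m (Metric.ball y s)) :=
            mul_le_mul_right ih _
        _ = (ENNReal.ofReal C_D) ^ (k + 1) * m (Metric.ball y s) := by ring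
  intro x r
  rcases le_or_gt r 0 with hr | hr
  · rw [Metric.ball_eq_empty.mpr hr, closure_empty]
    exact isCompact_empty
  -- it suffices to show the ball is totally bounded
  have htb : TotallyBounded (Metric.ball x r) := by
    by_contra htb
    rw [Metric.totallyBounded_iff] at htb
    push_neg at htb
    obtain ⟨ε, hε, hsep⟩ := htb
    -- construct an ε-separated sequence in the ball
    have hseq : ∃ f : ℕ → X, (∀ n, f n ∈ Metric.ball x r) ∧
        Pairwise (Function.onFun (fun a b => ε ≤ dist a b) f) := by
      have hsymm : Std.Symm (fun a b : X => ε ≤ dist a b) := ⟨fun a b h => by rwa [dist_comm]⟩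
      apply exists_seq_of_forall_finset_exists' (fun z => z ∈ Metric.ball x r)
        (fun a b => ε ≤ dist a b)
      intro t _
      obtain ⟨z, hz, hz'⟩ := Set.not_subset.mp (hsep ↑t t.finite_toSet)
      refine ⟨z, hz, fun w hw => ?_⟩
      by_contra hlt
      exact hz' (Set.mem_iUnion₂.mpr ⟨w, hw, by simpa [dist_comm] using lt_of_not_ge hlt⟩)
    obtain ⟨f, hf, hf'⟩ := hseq
    -- the balls of radius ε/2 around the f n are pairwise disjoint
    have hdisj : Pairwise (Function.onFun Disjoint fun n => Metric.ball (f n) (ε / 2)) := by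
      intro i j hij
      exact Metric.ball_disjoint_ball (by linarith [hf' hij])
    -- pick k with 2 r ≤ 2^k * (ε/2)
    obtain ⟨k, hk⟩ := pow_unbounded_of_one_lt ((2 * r) / (ε / 2)) (one_lt_two (α := ℝ))
    have hk' : 2 * r ≤ 2 ^ k * (ε / 2) := by
      rw [div_lt_iff₀ (by linarith)] at hk
      linarith
    -- each small ball has measure at least C_D⁻ᵏ * m(B(x,r))
    have hlow : ∀ n, m (Metric.ball x r) ≤
        (ENNReal.ofReal C_D) ^ k * m (Metric.ball (f n) (ε / 2)) := by
      intro n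
      have hsub : Metric.ball x r ⊆ Metric.ball (f n) (2 ^ k * (ε / 2)) := by
        intro z hz
        have h1 : dist z (f n) ≤ dist z x + dist x (f n) := dist_triangle _ _ _
        have h2 := hf n
        rw [Metric.mem_ball, dist_comm] at h2
        rw [Metric.mem_ball] at hz ⊢
        linarith
      calc m (Metric.ball x r) ≤ m (Metric.ball (f n) (2 ^ k * (ε / 2))) := measure_mono hsub
        _ ≤ (ENNReal.ofReal C_D) ^ k * m (Metric.ball (f n) (ε / 2)) :=
            hiter (f n) (ε / 2) (by linarith) k
    -- summing over n gives a contradiction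
    have hmeas : m (⋃ n, Metric.ball (f n) (ε / 2)) = ∑' n, m (Metric.ball (f n) (ε / 2)) :=
      measure_iUnion hdisj fun n => measurableSet_ball
    have hsub2 : (⋃ n, Metric.ball (f n) (ε / 2)) ⊆ Metric.ball x (r + ε / 2) := by
      refine Set.iUnion_subset fun n z hz => ?_
      have h1 := hf n
      rw [Metric.mem_ball] at h1 hz ⊢
      calc dist z x ≤ dist z (f n) + dist (f n) x := dist_triangle _ _ _
        _ < ε / 2 + r := by linarith
        _ = r + ε / 2 := by ring
    have hfin2 : m (⋃ n, Metric.ball (f n) (ε / 2)) < ∞ :=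
      lt_of_le_of_lt (measure_mono hsub2) (hfin x (r + ε / 2) (by linarith))
    have htop : (∑' _ : ℕ, m (Metric.ball x r)) = ∞ :=
      ENNReal.tsum_const_eq_top_of_ne_zero (hpos x r hr).ne'
    have : (∞ : ℝ≥0∞) ≤ (ENNReal.ofReal C_D) ^ k * m (⋃ n, Metric.ball (f n) (ε / 2)) := by
      calc (∞ : ℝ≥0∞) = ∑' _ : ℕ, m (Metric.ball x r) := htop.symm
        _ ≤ ∑' n, (ENNReal.ofReal C_D) ^ k * m (Metric.ball (f n) (ε / 2)) :=
            ENNReal.tsum_le_tsum hlow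
        _ = (ENNReal.ofReal C_D) ^ k * ∑' n, m (Metric.ball (f n) (ε / 2)) :=
            ENNReal.tsum_mul_left
        _ = (ENNReal.ofReal C_D) ^ k * m (⋃ n, Metric.ball (f n) (ε / 2)) := by rw [hmeas]
    have hne : (ENNReal.ofReal C_D) ^ k * m (⋃ n, Metric.ball (f n) (ε / 2)) < ∞ :=
      ENNReal.mul_lt_top (by simp [ENNReal.pow_lt_top, ENNReal.ofReal_lt_top]) hfin2
    exact absurd (lt_of_le_of_lt this hne) (lt_irrefl _)
  exact TotallyBounded.isCompact_of_isClosed htb.closure isClosed_closure
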